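/- arXiv:2603.08758 — 5 statements merged into one kernel-verified Lean document; each statement's English description precedes it below -/
import Mathlib

section
/- Let G be a group acting on a set X and acting transitively on sets M1 and M2. Fix p0 ∈ M1 and q0 ∈ M2, and let H1 := Stab_G(p0) and H2 := Stab_G(q0). Let ρ1 : M1 → G satisfy ρ1(p) · p = p0 for all p ∈ M1, and let ρ2 : M2 → G satisfy ρ2(q) · q = q0 for all q ∈ M2. Define T1 : X × M1 × M2 → X × M2 by T1(x, p, q) := (ρ1(p) · x, ρ1(p) · q) and T2 : X × M1 × M2 → X × M1 by T2(x, p, q) := (ρ2(q) · x, ρ2(q) · p). Then for every H2-invariant function f_{H2} : X × M1 → Y (invariant under the diagonal H2-action), there exists a unique H1-invariant function f_{H1} : X × M2 → Y (invariant under the diagonal H1-action) such that f_{H1}(T1(x, p, q)) = f_{H2}(T2(x, p, q)) for all (x, p, q) ∈ X × M1 × M2. -/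
/-- **Flexibility in the choice of reduction.** With `G` acting transitively on `M1` and `M2`,
base points `p0 ∈ M1`, `q0 ∈ M2`, isotropy groups `H1 = Stab_G(p0)`, `H2 = Stab_G(q0)`,
canonicalization maps `ρ1, ρ2`, and maps `T1(x,p,q) = (ρ1(p) • x, ρ1(p) • q)`,
`T2(x,p,q) = (ρ2(q) • x, ρ2(q) • p)`: for every `H2`-invariant `f_{H2} : X × M1 → Y` there
is a unique `H1`-invariant `f_{H1} : X × M2 → Y` with `f_{H1} ∘ T1 = f_{H2} ∘ T2`. -/
theorem reduction_flexibility {G X M1 M2 Y : Type*}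
    [Group G] [MulAction G X] [MulAction G M1] [MulAction G M2]
    (htrans1 : ∀ p q : M1, ∃ g : G, g • p = q)
    (htrans2 : ∀ p q : M2, ∃ g : G, g • p = q)
    (p0 : M1) (q0 : M2)
    (ρ1 : M1 → G) (hρ1 : ∀ p : M1, ρ1 p • p = p0)
    (ρ2 : M2 → G) (hρ2 : ∀ q : M2, ρ2 q • q = q0)
    (fH2 : X × M1 → Y)
    (hfH2 : ∀ h ∈ MulAction.stabilizer G q0, ∀ (x : X) (p : M1),
      fH2 (h • x, h • p) = fH2 (x, p)) :
    ∃! fH1 : X × M2 → Y,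
      (∀ h ∈ MulAction.stabilizer G p0, ∀ (x : X) (q : M2),
        fH1 (h • x, h • q) = fH1 (x, q)) ∧
      (∀ (x : X) (p : M1) (q : M2),
        fH1 (ρ1 p • x, ρ1 p • q) = fH2 (ρ2 q • x, ρ2 q • p)) := by
  have key : ∀ (a b : G) (q : M2), a • q = q0 → b • q = q0 → ∀ (x : X) (p : M1),
      fH2 (a • x, a • p) = fH2 (b • x, b • p) := by
    intro a b q ha hb x p
    have hk : (a * b⁻¹) ∈ MulAction.stabilizer G q0 := by
      have hq : b⁻¹ • q0 = q := by rw [← hb, inv_smul_smul]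
      rw [MulAction.mem_stabilizer_iff, mul_smul, hq, ha]
    calc fH2 (a • x, a • p) = fH2 ((a * b⁻¹) • b • x, (a * b⁻¹) • b • p) := by
          simp [mul_smul, smul_smul]
      _ = fH2 (b • x, b • p) := hfH2 _ hk _ _
  refine ⟨fun z => fH2 (ρ2 z.2 • z.1, ρ2 z.2 • p0), ⟨?_, ?_⟩, ?_⟩
  · intro h hh x q
    simp only
    have hp0 : h • p0 = p0 := hh
    have h1 : ρ2 (h • q) • p0 = (ρ2 (h • q) * h) • p0 := by
      rw [mul_smul, hp0]
    have h2 : ρ2 (h • q) • h • x = (ρ2 (h • q) * h) • x := (mul_smul _ _ _).symm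
    rw [h1, h2]
    exact key (ρ2 (h • q) * h) _ q (by rw [mul_smul]; exact hρ2 _) (hρ2 q) x p0
  · intro x p q
    simp only
    have h1 : ρ2 (ρ1 p • q) • p0 = (ρ2 (ρ1 p • q) * ρ1 p) • p := by
      rw [mul_smul, hρ1]
    have h2 : ρ2 (ρ1 p • q) • ρ1 p • x = (ρ2 (ρ1 p • q) * ρ1 p) • x := (mul_smul _ _ _).symm
    rw [h1, h2]
    exact key (ρ2 (ρ1 p • q) * ρ1 p) _ q (by rw [mul_smul]; exact hρ2 _) (hρ2 q) x p
  · rintro f ⟨hinv, hint⟩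
    funext z
    obtain ⟨x, q⟩ := z
    have hs : ρ1 p0 ∈ MulAction.stabilizer G p0 := hρ1 p0
    have := hint x p0 q
    rw [hinv _ hs x q] at this
    simpa using this
end

section
/- Let n ≥ 1 and let t = (t₁, …, tₙ) and t' = (t'₁, …, t'ₙ) be two n-tuples of points in n-dimensional Euclidean space ℝⁿ. Then there exists a bijective affine isometry g : ℝⁿ → ℝⁿ with g(tᵢ) = t'ᵢ for all i if and only if there exists a bijective affine isometry g : ℝⁿ → ℝⁿ whose linear part has determinant 1 and g(tᵢ) = t'ᵢ for all i. Consequently, every function on n-tuples of points of ℝⁿ that is invariant under the diagonal SE(n)-action is also invariant under the diagonal E(n)-action. -/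
open EuclideanGeometry Module

lemma aux_det_pm_one {E : Type*} [NormedAddCommGroup E] [InnerProductSpace ℝ E]
    [FiniteDimensional ℝ E] (A : E ≃ₗᵢ[ℝ] E) :
    LinearMap.det (A.toLinearEquiv : E →ₗ[ℝ] E) = 1 ∨
      LinearMap.det (A.toLinearEquiv : E →ₗ[ℝ] E) = -1 := by
  have hadj : (A.symm.toLinearEquiv : E →ₗ[ℝ] E)
      = LinearMap.adjoint (A.toLinearEquiv : E →ₗ[ℝ] E) := by
    rw [LinearMap.eq_adjoint_iff]
    intro x y
    have : (inner ℝ (A.symm x) y : ℝ) = inner ℝ x (A y) := by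
      conv_lhs => rw [← A.inner_map_map (A.symm x) y]
      simp
    exact this
  have hdet : LinearMap.det (LinearMap.adjoint (A.toLinearEquiv : E →ₗ[ℝ] E))
      = LinearMap.det (A.toLinearEquiv : E →ₗ[ℝ] E) := by
    let b := stdOrthonormalBasis ℝ E
    rw [← LinearMap.det_toMatrix b.toBasis, ← LinearMap.det_toMatrix b.toBasis,
      LinearMap.toMatrix_adjoint, Matrix.det_conjTranspose, star_trivial]
  have hcomp : (A.symm.toLinearEquiv : E →ₗ[ℝ] E) ∘ₗ (A.toLinearEquiv : E →ₗ[ℝ] E)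
      = LinearMap.id := by
    ext x; simp
  have h1 : LinearMap.det (A.toLinearEquiv : E →ₗ[ℝ] E)
      * LinearMap.det (A.toLinearEquiv : E →ₗ[ℝ] E) = 1 := by
    have := congrArg LinearMap.det hcomp
    rw [LinearMap.det_comp, hadj, hdet, LinearMap.det_id] at this
    exact this
  exact mul_self_eq_one_iff.mp h1

lemma aux_lin_apply {n : ℕ} (e : EuclideanSpace ℝ (Fin n) ≃ᵃⁱ[ℝ] EuclideanSpace ℝ (Fin n))
    (x : EuclideanSpace ℝ (Fin n)) : e.linearIsometryEquiv x = e x - e 0 := by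
  simpa using e.map_vsub x 0

lemma aux_lin_trans {n : ℕ} (g r : EuclideanSpace ℝ (Fin n) ≃ᵃⁱ[ℝ] EuclideanSpace ℝ (Fin n)) :
    ((g.trans r).linearIsometryEquiv.toLinearEquiv :
        EuclideanSpace ℝ (Fin n) →ₗ[ℝ] EuclideanSpace ℝ (Fin n))
      = (r.linearIsometryEquiv.toLinearEquiv :
          EuclideanSpace ℝ (Fin n) →ₗ[ℝ] EuclideanSpace ℝ (Fin n))
        ∘ₗ (g.linearIsometryEquiv.toLinearEquiv :
          EuclideanSpace ℝ (Fin n) →ₗ[ℝ] EuclideanSpace ℝ (Fin n)) := by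
  ext x : 1
  have h1 : (g.trans r).linearIsometryEquiv x = r (g x) - r (g 0) := by
    simpa [AffineIsometryEquiv.coe_trans, Function.comp] using aux_lin_apply (g.trans r) x
  have h2 : r.linearIsometryEquiv (g.linearIsometryEquiv x) = r (g x) - r (g 0) := by
    have := r.map_vsub (g x) (g 0)
    have hg : g.linearIsometryEquiv x = g x -ᵥ g 0 := (g.map_vsub x 0).symm ▸ by
      simpa using (g.map_vsub x 0).symm
    rw [aux_lin_apply g x]
    simpa using r.map_vsub (g x) (g 0)
  simp only [LinearMap.coe_comp, Function.comp_apply]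
  exact h1.trans h2.symm

/-- For `n`-tuples of points in `ℝⁿ`, the `E(n)`-orbit coincides with the `SE(n)`-orbit;
consequently every `SE(n)`-invariant function of `n`-tuples is `E(n)`-invariant. -/
theorem ntuple_En_orbit_eq_SEn_orbit {Y : Type*} (n : ℕ) (hn : 1 ≤ n) :
    (∀ t t' : Fin n → EuclideanSpace ℝ (Fin n),
      (∃ g : EuclideanSpace ℝ (Fin n) ≃ᵃⁱ[ℝ] EuclideanSpace ℝ (Fin n),
        ∀ i : Fin n, g (t i) = t' i) ↔
      (∃ g : EuclideanSpace ℝ (Fin n) ≃ᵃⁱ[ℝ] EuclideanSpace ℝ (Fin n),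
        LinearMap.det (g.linearIsometryEquiv.toLinearEquiv :
          EuclideanSpace ℝ (Fin n) →ₗ[ℝ] EuclideanSpace ℝ (Fin n)) = 1 ∧
        ∀ i : Fin n, g (t i) = t' i)) ∧
    (∀ f : (Fin n → EuclideanSpace ℝ (Fin n)) → Y,
      (∀ g : EuclideanSpace ℝ (Fin n) ≃ᵃⁱ[ℝ] EuclideanSpace ℝ (Fin n),
        LinearMap.det (g.linearIsometryEquiv.toLinearEquiv :
          EuclideanSpace ℝ (Fin n) →ₗ[ℝ] EuclideanSpace ℝ (Fin n)) = 1 →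
        ∀ t : Fin n → EuclideanSpace ℝ (Fin n), f (fun i => g (t i)) = f t) →
      ∀ (g : EuclideanSpace ℝ (Fin n) ≃ᵃⁱ[ℝ] EuclideanSpace ℝ (Fin n))
        (t : Fin n → EuclideanSpace ℝ (Fin n)), f (fun i => g (t i)) = f t) := by
  have key : ∀ t t' : Fin n → EuclideanSpace ℝ (Fin n),
      (∃ g : EuclideanSpace ℝ (Fin n) ≃ᵃⁱ[ℝ] EuclideanSpace ℝ (Fin n),
        ∀ i : Fin n, g (t i) = t' i) ↔
      (∃ g : EuclideanSpace ℝ (Fin n) ≃ᵃⁱ[ℝ] EuclideanSpace ℝ (Fin n),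
        LinearMap.det (g.linearIsometryEquiv.toLinearEquiv :
          EuclideanSpace ℝ (Fin n) →ₗ[ℝ] EuclideanSpace ℝ (Fin n)) = 1 ∧
        ∀ i : Fin n, g (t i) = t' i) := by
    intro t t'
    constructor
    · rintro ⟨g, hg⟩
      rcases aux_det_pm_one g.linearIsometryEquiv with h | h
      · exact ⟨g, h, hg⟩
      · -- build a reflection fixing all t' i, with determinant -1
        have i₀ : Fin n := ⟨0, hn⟩
        -- the points t' span an affine subspace of dimension ≤ n - 1
        have hcard : Fintype.card (Fin n) = (n - 1) + 1 := by
          simp [Fintype.card_fin]; omega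
        have hfr : finrank ℝ (vectorSpan ℝ (Set.range t')) ≤ n - 1 :=
          finrank_vectorSpan_range_le ℝ t' hcard
        have hne : (vectorSpan ℝ (Set.range t')) ≠ ⊤ := by
          intro htop
          rw [htop, finrank_top, finrank_euclideanSpace_fin] at hfr
          omega
        obtain ⟨v, hv, hv0⟩ : ∃ v ∈ (vectorSpan ℝ (Set.range t'))ᗮ, v ≠ 0 := by
          by_contra hcon
          push_neg at hcon
          apply hne
          rw [← Submodule.orthogonal_eq_bot_iff]
          exact (Submodule.eq_bot_iff _).2 hcon
        set K : Submodule ℝ (EuclideanSpace ℝ (Fin n)) := (ℝ ∙ v)ᗮ with hK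
        set H : AffineSubspace ℝ (EuclideanSpace ℝ (Fin n)) := AffineSubspace.mk' (t' i₀) K
          with hH
        haveI : Nonempty H := ⟨⟨t' i₀, AffineSubspace.self_mem_mk' _ _⟩⟩
        have hHdir : H.direction = K := AffineSubspace.direction_mk' _ _
        haveI : Submodule.HasOrthogonalProjection H.direction := hHdir ▸ inferInstance
        set r := EuclideanGeometry.reflection H with hr
        have hmem : ∀ i, t' i ∈ H := by
          intro i
          rw [hH, AffineSubspace.mem_mk']
          have hvs : t' i -ᵥ t' i₀ ∈ vectorSpan ℝ (Set.range t') :=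
            vsub_mem_vectorSpan ℝ (Set.mem_range_self i) (Set.mem_range_self i₀)
          rw [hK, Submodule.mem_orthogonal]
          intro u hu
          rw [Submodule.mem_span_singleton] at hu
          obtain ⟨c, rfl⟩ := hu
          have h0 : (inner ℝ v (t' i -ᵥ t' i₀) : ℝ) = 0 := by
            have := (Submodule.mem_orthogonal _ v).1 hv _ hvs
            rw [real_inner_comm] at this
            exact this
          rw [real_inner_smul_left, h0, mul_zero]
        have hrfix : ∀ i, r (t' i) = t' i := fun i =>
          (EuclideanGeometry.reflection_eq_self_iff _).2 (hmem i)
        have hrlin : r.linearIsometryEquiv = Submodule.reflection H.direction := by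
          rw [hr, EuclideanGeometry.reflection]
          rfl
        have hrdet : LinearMap.det (r.linearIsometryEquiv.toLinearEquiv :
            EuclideanSpace ℝ (Fin n) →ₗ[ℝ] EuclideanSpace ℝ (Fin n)) = -1 := by
          rw [hrlin]
          have : (LinearMap.det ((Submodule.reflection H.direction).toLinearEquiv :
              EuclideanSpace ℝ (Fin n) →ₗ[ℝ] EuclideanSpace ℝ (Fin n)))
              = (-1 : ℝ) ^ finrank ℝ H.directionᗮ := Submodule.det_reflection H.direction
          rw [this, hHdir, hK, Submodule.orthogonal_orthogonal,
            finrank_span_singleton hv0, pow_one]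
        refine ⟨g.trans r, ?_, fun i => by
          simp [AffineIsometryEquiv.coe_trans, hg i, hrfix i]⟩
        rw [aux_lin_trans, LinearMap.det_comp, hrdet, h]
        norm_num
    · rintro ⟨g, _, hg⟩
      exact ⟨g, hg⟩
  refine ⟨key, ?_⟩
  intro f hf g t
  obtain ⟨g', hdet, hg'⟩ := (key t (fun i => g (t i))).1 ⟨g, fun i => rfl⟩
  have : (fun i => g (t i)) = fun i => g' (t i) := funext fun i => (hg' i).symm
  rw [this, hf g' hdet t]
end

section
/- Let the two-element group C₂ = {1, σ} act on ℝ² by σ · (a, b) := (a, −b), and diagonally on ℝ² × ℝ². For s = (s₁, s₂) and r = (r₁, r₂) in ℝ², define F(s, r) := (s₁, r₁, s₂², r₂², (s₂ − r₂)²) ∈ ℝ⁵. Then F separates the orbits of this action: for all pairs (s, r) and (s', r') in ℝ² × ℝ², F(s, r) = F(s', r') if and only if (s', r') = (s, r) or (s', r') = (σ · s, σ · r). -/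
/-- The invariant map `F(s, r) = (s₁, r₁, s₂², r₂², (s₂ − r₂)²)` separates the orbits of the
diagonal action of `C₂ = {1, σ}` on `ℝ² × ℝ²`, where `σ · (a, b) = (a, −b)`. -/
theorem C2_invariants_separate_orbits_plane (s r s' r' : ℝ × ℝ) :
    ((s.1, r.1, s.2 ^ 2, r.2 ^ 2, (s.2 - r.2) ^ 2) =
      ((s'.1, r'.1, s'.2 ^ 2, r'.2 ^ 2, (s'.2 - r'.2) ^ 2) : ℝ × ℝ × ℝ × ℝ × ℝ)) ↔
    ((s', r') = (s, r) ∨ (s', r') = (((s.1, -s.2) : ℝ × ℝ), ((r.1, -r.2) : ℝ × ℝ))) := by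
  simp only [Prod.ext_iff, Prod.mk.injEq]
  constructor
  · rintro ⟨h1, h2, h3, h4, h5⟩
    rcases sq_eq_sq_iff_eq_or_eq_neg.mp h3.symm with hs | hs <;>
    rcases sq_eq_sq_iff_eq_or_eq_neg.mp h4.symm with hr | hr
    · exact Or.inl ⟨⟨h1.symm, hs⟩, h2.symm, hr⟩
    · have h6 : s.2 * r.2 = 0 := by
        rw [hs, hr] at h5; linear_combination (-1/4 : ℝ) * h5
      rcases mul_eq_zero.mp h6 with hz | hz
      · exact Or.inr ⟨⟨h1.symm, by rw [hs, hz, neg_zero]⟩, h2.symm, hr⟩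
      · exact Or.inl ⟨⟨h1.symm, hs⟩, h2.symm, by rw [hr, hz, neg_zero]⟩
    · have h6 : s.2 * r.2 = 0 := by
        rw [hs, hr] at h5; linear_combination (-1/4 : ℝ) * h5
      rcases mul_eq_zero.mp h6 with hz | hz
      · exact Or.inl ⟨⟨h1.symm, by rw [hs, hz, neg_zero]⟩, h2.symm, hr⟩
      · exact Or.inr ⟨⟨h1.symm, hs⟩, h2.symm, by rw [hr, hz, neg_zero]⟩
    · exact Or.inr ⟨⟨h1.symm, hs⟩, h2.symm, hr⟩
  · rintro (⟨⟨h1, h2⟩, h3, h4⟩ | ⟨⟨h1, h2⟩, h3, h4⟩) <;>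
      exact ⟨h1.symm, h3.symm, by rw [h2] <;> ring, by rw [h4] <;> ring, by rw [h2, h4] <;> ring⟩
end

section
/- Let S² = { x ∈ ℝ³ : x₁² + x₂² + x₃² = 1 } be the unit sphere, and let the two-element group C₂ = {1, σ} act on S² by σ · (a, b, c) := (a, b, −c), and diagonally on S² × S². For s = (s₁, s₂, s₃) and r = (r₁, r₂, r₃) in S², define F(s, r) := (s₁, s₂, r₁, r₂, s₃·r₃) ∈ ℝ⁵. Then F separates the orbits of this action: for all pairs (s, r) and (s', r') in S² × S², F(s, r) = F(s', r') if and only if (s', r') = (s, r) or (s', r') = (σ · s, σ · r). -/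
/-- The invariant map `F(s, r) = (s₁, s₂, r₁, r₂, s₃·r₃)` separates the orbits of the diagonal
action of `C₂ = {1, σ}` on `S² × S²`, where `σ · (a, b, c) = (a, b, −c)` and
`S² = {x ∈ ℝ³ : x₁² + x₂² + x₃² = 1}`. -/
theorem C2_invariants_separate_orbits_sphere (s r s' r' : ℝ × ℝ × ℝ)
    (hs : s.1 ^ 2 + s.2.1 ^ 2 + s.2.2 ^ 2 = 1)
    (hr : r.1 ^ 2 + r.2.1 ^ 2 + r.2.2 ^ 2 = 1)
    (hs' : s'.1 ^ 2 + s'.2.1 ^ 2 + s'.2.2 ^ 2 = 1)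
    (hr' : r'.1 ^ 2 + r'.2.1 ^ 2 + r'.2.2 ^ 2 = 1) :
    ((s.1, s.2.1, r.1, r.2.1, s.2.2 * r.2.2) =
      ((s'.1, s'.2.1, r'.1, r'.2.1, s'.2.2 * r'.2.2) : ℝ × ℝ × ℝ × ℝ × ℝ)) ↔
    ((s', r') = (s, r) ∨
      (s' = ((s.1, s.2.1, -s.2.2) : ℝ × ℝ × ℝ) ∧ r' = ((r.1, r.2.1, -r.2.2) : ℝ × ℝ × ℝ))) := by
  constructor
  · intro h
    simp only [Prod.mk.injEq] at h
    obtain ⟨h1, h2, h3, h4, h5⟩ := h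
    rw [h1, h2] at hs
    rw [h3, h4] at hr
    have ha2 : s'.2.2 ^ 2 = s.2.2 ^ 2 := by linarith
    have hb2 : r'.2.2 ^ 2 = r.2.2 ^ 2 := by linarith
    have key : (s'.2.2 = s.2.2 ∧ r'.2.2 = r.2.2) ∨
        (s'.2.2 = -s.2.2 ∧ r'.2.2 = -r.2.2) := by
      have ha : s'.2.2 = s.2.2 ∨ s'.2.2 = -s.2.2 := sq_eq_sq_iff_eq_or_eq_neg.mp ha2
      have hb : r'.2.2 = r.2.2 ∨ r'.2.2 = -r.2.2 := sq_eq_sq_iff_eq_or_eq_neg.mp hb2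
      rcases ha with ha | ha <;> rcases hb with hb | hb
      · exact Or.inl ⟨ha, hb⟩
      · by_cases hs0 : s.2.2 = 0
        · exact Or.inr ⟨by rw [ha, hs0, neg_zero], hb⟩
        · left
          rw [ha] at h5
          exact ⟨ha, (mul_left_cancel₀ hs0 h5).symm⟩
      · by_cases hr0 : r.2.2 = 0
        · exact Or.inr ⟨ha, by rw [hb, hr0, neg_zero]⟩
        · left
          rw [hb] at h5
          exact ⟨(mul_right_cancel₀ hr0 h5).symm, hb⟩
      · exact Or.inr ⟨ha, hb⟩
    rcases key with ⟨ha, hb⟩ | ⟨ha, hb⟩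
    · left
      have : s' = s := Prod.ext h1.symm (Prod.ext h2.symm ha)
      have : r' = r := Prod.ext h3.symm (Prod.ext h4.symm hb)
      simp_all
    · right
      exact ⟨Prod.ext h1.symm (Prod.ext h2.symm ha),
        Prod.ext h3.symm (Prod.ext h4.symm hb)⟩
  · rintro (h | ⟨h1, h2⟩)
    · obtain ⟨hs1, hr1⟩ := Prod.mk.injEq .. ▸ h
      simp_all
    · rw [h1, h2]; simp
end

section
/- Let X be a topological space on which a group G acts, let K ⊆ X be a compact subset, and let f_inv : X → ℝᴺ be a continuous G-invariant map that separates orbits, i.e. f_inv(x) = f_inv(y) implies y = g · x for some g ∈ G. Then for every continuous G-invariant function f : X → ℝ there exists a continuous function h : ℝᴺ → ℝ such that f(x) = h(f_inv(x)) for all x ∈ K. -/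
open Topology


/-- **Maximal expressivity.** If `f_inv : X → ℝᴺ` is a continuous `G`-invariant map that
separates orbits, then every continuous `G`-invariant `f : X → ℝ` factors through `f_inv` via
a continuous function `h : ℝᴺ → ℝ` on any compact set `K ⊆ X`. -/
theorem invariant_factors_through_separating_invariants
    {X G : Type*} [TopologicalSpace X] [Group G] [MulAction G X]
    (K : Set X) (hK : IsCompact K) (N : ℕ)
    (finv : X → EuclideanSpace ℝ (Fin N)) (hfinv_cont : Continuous finv)
    (hfinv_inv : ∀ (g : G) (x : X), finv (g • x) = finv x)
    (hfinv_sep : ∀ x y : X, finv x = finv y → ∃ g : G, y = g • x)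
    (f : X → ℝ) (hf_cont : Continuous f)
    (hf_inv : ∀ (g : G) (x : X), f (g • x) = f x) :
    ∃ h : EuclideanSpace ℝ (Fin N) → ℝ, Continuous h ∧ ∀ x ∈ K, f x = h (finv x) := by
  classical
  set S : Set (EuclideanSpace ℝ (Fin N)) := finv '' K with hS
  have hScomp : IsCompact S := hK.image hfinv_cont
  haveI : CompactSpace K := isCompact_iff_compactSpace.mp hK
  -- the restricted map φ : K → S
  let φ : K → S := fun x => ⟨finv x, ⟨x, x.2, rfl⟩⟩
  have hφcont : Continuous φ :=
    Continuous.subtype_mk (hfinv_cont.comp continuous_subtype_val) _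
  have hφsurj : Function.Surjective φ := by
    rintro ⟨s, x, hxK, rfl⟩
    exact ⟨⟨x, hxK⟩, rfl⟩
  have hφquot : IsQuotientMap φ := IsQuotientMap.of_surjective_continuous hφsurj hφcont
  -- define h₀ : S → ℝ by choosing a preimage
  let h₀ : S → ℝ := fun s => f ((hφsurj s).choose : X)
  have key : ∀ (x : X) (s : S), finv x = (s : EuclideanSpace ℝ (Fin N)) → h₀ s = f x := by
    intro x s hx
    have hc : finv ((hφsurj s).choose : X) = (s : EuclideanSpace ℝ (Fin N)) :=
      congrArg Subtype.val (hφsurj s).choose_spec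
    obtain ⟨g, hg⟩ := hfinv_sep _ x (hc.trans hx.symm)
    simpa [h₀, hg] using (hf_inv g ((hφsurj s).choose : X)).symm
  have hcomp : h₀ ∘ φ = fun x : K => f x := by
    funext x
    exact key x (φ x) rfl
  have hh₀ : Continuous h₀ := by
    rw [hφquot.continuous_iff, hcomp]
    exact hf_cont.comp continuous_subtype_val
  -- extend by Tietze
  obtain ⟨g, hg⟩ := ContinuousMap.exists_restrict_eq (Y := ℝ)
    hScomp.isClosed ⟨h₀, hh₀⟩
  refine ⟨g, g.continuous, fun x hx => ?_⟩
  have : g (finv x) = h₀ ⟨finv x, ⟨x, hx, rfl⟩⟩ := by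
    exact congrFun (congrArg DFunLike.coe hg) ⟨finv x, ⟨x, hx, rfl⟩⟩
  rw [this, key x ⟨finv x, ⟨x, hx, rfl⟩⟩ rfl]
end
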